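/- Counting lemma for dual feasibility with active and inactive clients: let J be a nonempty finite linearly ordered set partitioned into sets I and A such that every element of I precedes every element of A. Let α : J → ℝ, let w : J → ℝ with w_j ≥ 0 for all j, and let F ≥ 0. Suppose: (i) for every k ∈ A, Σ_{j∈A} [α_j − w_j]⁺ + Σ_{j∈I} [α_k − 2·w_j − w_k]⁺ ≤ F; and (ii) for every k ∈ I, Σ_{j ≥ k} [α_k − w_j]⁺ + Σ_{j < k} [α_k − 2·w_j − w_k]⁺ ≤ F. Then Σ_{j∈J} (α_j − 2·w_j) ≤ F. -/

import Mathlib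

open Finset

/-- Counting lemma for dual feasibility with active and inactive clients: let the nonempty
finite linearly ordered set `J` be partitioned into `I` and `A` with every element of `I`
preceding every element of `A`. If
(i) for every `k ∈ A`, `Σ_{j∈A} [α_j − w_j]⁺ + Σ_{j∈I} [α_k − 2w_j − w_k]⁺ ≤ F`, and
(ii) for every `k ∈ I`, `Σ_{j ≥ k} [α_k − w_j]⁺ + Σ_{j < k} [α_k − 2w_j − w_k]⁺ ≤ F`,
then `Σ_{j∈J} (α_j − 2w_j) ≤ F`. -/
theorem active_inactive_dual_feasibility {J : Type*} [Fintype J] [LinearOrder J] [Nonempty J]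
    (I A : Finset J) (hunion : I ∪ A = Finset.univ) (hdisj : Disjoint I A)
    (horder : ∀ i ∈ I, ∀ a ∈ A, i < a)
    (α w : J → ℝ) (hw : ∀ j, 0 ≤ w j) (F : ℝ) (hF : 0 ≤ F)
    (hA : ∀ k ∈ A,
      (∑ j ∈ A, max (α j - w j) 0) +
      (∑ j ∈ I, max (α k - 2 * w j - w k) 0) ≤ F)
    (hI : ∀ k ∈ I,
      (∑ j ∈ Finset.univ.filter (fun j => k ≤ j), max (α k - w j) 0) +
      (∑ j ∈ Finset.univ.filter (fun j => j < k), max (α k - 2 * w j - w k) 0) ≤ F) :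
    ∑ j, (α j - 2 * w j) ≤ F := by
  classical
  set n := Fintype.card J with hn
  have hnpos : 0 < n := Fintype.card_pos
  have hcompl : ∀ j : J, j ∉ A → j ∈ I := by
    intro j hj
    have h : j ∈ I ∪ A := by rw [hunion]; exact Finset.mem_univ j
    simpa [Finset.mem_union, hj] using h
  have hIA : ∀ k ∈ I, k ∉ A := fun k hk => Finset.disjoint_left.mp hdisj hk
  set g : J → J → ℝ := fun k j =>
    if k ∈ A then (if j ∈ A then α j - w j else α k - 2 * w j - w k)
    else (if k ≤ j then α k - w j else α k - 2 * w j - w k) with hg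
  set c : J → J → ℝ := fun k j => if j < k then 2 * w j + w k else w j with hc
  set a : J → J → ℝ := fun k j => if k ∈ A ∧ j ∈ A then α j else α k with ha
  -- each row sums to at most F
  have hgF : ∀ k : J, ∑ j, g k j ≤ F := by
    intro k
    by_cases hk : k ∈ A
    · have hsplit : ∑ j, g k j
          = (∑ j ∈ Finset.univ.filter (fun j => j ∈ A), (α j - w j))
          + (∑ j ∈ Finset.univ.filter (fun j => ¬ j ∈ A), (α k - 2 * w j - w k)) := by
        simp only [hg, if_pos hk]
        exact Finset.sum_ite _ _
      have hfA : Finset.univ.filter (fun j => j ∈ A) = A := by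
        ext j; simp
      have hfI : Finset.univ.filter (fun j => ¬ j ∈ A) = I := by
        ext j; simp only [Finset.mem_filter, Finset.mem_univ, true_and]
        constructor
        · exact hcompl j
        · exact fun hj => hIA j hj
      rw [hsplit, hfA, hfI]
      calc (∑ j ∈ A, (α j - w j)) + (∑ j ∈ I, (α k - 2 * w j - w k))
          ≤ (∑ j ∈ A, max (α j - w j) 0) + (∑ j ∈ I, max (α k - 2 * w j - w k) 0) := by
            gcongr with j hj j hj <;> exact le_max_left _ _
        _ ≤ F := hA k hk
    · have hkI : k ∈ I := hcompl k hk
      have hsplit : ∑ j, g k j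
          = (∑ j ∈ Finset.univ.filter (fun j => k ≤ j), (α k - w j))
          + (∑ j ∈ Finset.univ.filter (fun j => ¬ k ≤ j), (α k - 2 * w j - w k)) := by
        simp only [hg, if_neg hk]
        exact Finset.sum_ite _ _
      have hfilt : Finset.univ.filter (fun j => ¬ k ≤ j) = Finset.univ.filter (fun j => j < k) := by
        ext j; simp [not_le]
      rw [hsplit, hfilt]
      calc (∑ j ∈ Finset.univ.filter (fun j => k ≤ j), (α k - w j))
          + (∑ j ∈ Finset.univ.filter (fun j => j < k), (α k - 2 * w j - w k))
          ≤ (∑ j ∈ Finset.univ.filter (fun j => k ≤ j), max (α k - w j) 0)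
          + (∑ j ∈ Finset.univ.filter (fun j => j < k), max (α k - 2 * w j - w k) 0) := by
            gcongr with j hj j hj <;> exact le_max_left _ _
        _ ≤ F := hI k hkI
  -- termwise lower bound
  have hac : ∀ k j : J, a k j - c k j ≤ g k j := by
    intro k j
    by_cases hk : k ∈ A
    · by_cases hj : j ∈ A
      · by_cases hjk : j < k <;>
          simp only [hg, ha, hc, if_pos hk, if_pos hj, if_pos (And.intro hk hj), hjk,
            if_true, if_false] <;> [skip; skip] <;> linarith [hw j, hw k]
      · have hjI : j ∈ I := hcompl j hj
        have hjk : j < k := horder j hjI k hk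
        simp only [hg, ha, hc, if_pos hk, if_neg hj, hjk, if_true]
        have : ¬ (k ∈ A ∧ j ∈ A) := fun h => hj h.2
        rw [if_neg this]
        linarith
    · have : ¬ (k ∈ A ∧ j ∈ A) := fun h => hk h.1
      by_cases hkj : k ≤ j
      · have hjk : ¬ j < k := not_lt.mpr hkj
        simp only [hg, ha, hc, if_neg hk, if_pos hkj, if_neg this, if_neg hjk]
        exact le_rfl
      · have hjk : j < k := lt_of_not_ge hkj
        simp only [hg, ha, hc, if_neg hk, if_neg hkj, if_neg this, if_pos hjk]
        linarith
  have hcard : (I.card : ℝ) + A.card = n := by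
    have := Finset.card_union_of_disjoint hdisj
    rw [hunion, Finset.card_univ] at this
    exact_mod_cast this.symm
  -- sum of a
  have hSa : ∑ k, ∑ j, a k j = (n : ℝ) * ∑ j, α j := by
    have huniv : (Finset.univ : Finset J) = I ∪ A := hunion.symm
    have hsumI : ∀ k ∈ I, ∑ j, a k j = (n : ℝ) * α k := by
      intro k hk
      have : ∀ j : J, a k j = α k := by
        intro j; simp only [ha]
        rw [if_neg (fun h => hIA k hk h.1)]
      simp [this, Finset.card_univ, mul_comm, hn]
    have hsumA : ∀ k ∈ A, ∑ j, a k j = (I.card : ℝ) * α k + ∑ j ∈ A, α j := by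
      intro k hk
      rw [huniv, Finset.sum_union hdisj]
      have h1 : ∑ j ∈ I, a k j = (I.card : ℝ) * α k := by
        have he : ∀ j ∈ I, a k j = α k := fun j hj => by
          simp only [ha]; rw [if_neg (fun h => hIA j hj h.2)]
        rw [Finset.sum_congr rfl he, Finset.sum_const, nsmul_eq_mul]
      have h2 : ∑ j ∈ A, a k j = ∑ j ∈ A, α j := by
        refine Finset.sum_congr rfl (fun j hj => ?_)
        simp only [ha]; rw [if_pos ⟨hk, hj⟩]
      rw [h1, h2]
    calc ∑ k, ∑ j, a k j
        = (∑ k ∈ I, ∑ j, a k j) + (∑ k ∈ A, ∑ j, a k j) := by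
          rw [huniv, Finset.sum_union hdisj]
      _ = (∑ k ∈ I, (n : ℝ) * α k) + (∑ k ∈ A, ((I.card : ℝ) * α k + ∑ j ∈ A, α j)) := by
          rw [Finset.sum_congr rfl hsumI, Finset.sum_congr rfl hsumA]
      _ = (n : ℝ) * ∑ k ∈ I, α k + (I.card : ℝ) * ∑ k ∈ A, α k + (A.card : ℝ) * ∑ j ∈ A, α j := by
          rw [Finset.sum_add_distrib, ← Finset.mul_sum, ← Finset.mul_sum, Finset.sum_const,
            nsmul_eq_mul]
          ring
      _ = (n : ℝ) * (∑ k ∈ I, α k + ∑ k ∈ A, α k) := by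
          have : (I.card : ℝ) * ∑ k ∈ A, α k + (A.card : ℝ) * ∑ j ∈ A, α j
              = (n : ℝ) * ∑ k ∈ A, α k := by rw [← hcard]; ring
          linarith [this]
      _ = (n : ℝ) * ∑ j, α j := by rw [huniv, Finset.sum_union hdisj]
  -- sum of c
  have hSc : ∑ k, ∑ j, c k j ≤ 2 * (n : ℝ) * ∑ j, w j := by
    have hsplit : ∀ k j : J, c k j
        = (if j < k then 2 * w j else w j) + (if j < k then w k else 0) := by
      intro k j; by_cases h : j < k <;> simp [hc, h]
    calc ∑ k, ∑ j, c k j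
        = (∑ k, ∑ j, (if j < k then 2 * w j else w j))
        + (∑ k, ∑ j, (if j < k then w k else 0)) := by
          rw [← Finset.sum_add_distrib]
          refine Finset.sum_congr rfl (fun k _ => ?_)
          rw [← Finset.sum_add_distrib]
          exact Finset.sum_congr rfl (fun j _ => hsplit k j)
      _ = (∑ q, ∑ k, (if q < k then 2 * w q else w q))
        + (∑ q, ∑ j, (if j < q then w q else 0)) := by
          rw [Finset.sum_comm]
      _ = ∑ q, ∑ k, ((if q < k then 2 * w q else w q) + (if k < q then w q else 0)) := by
          rw [← Finset.sum_add_distrib]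
          refine Finset.sum_congr rfl (fun q _ => ?_)
          rw [← Finset.sum_add_distrib]
      _ ≤ ∑ q : J, ∑ k : J, 2 * w q := by
          refine Finset.sum_le_sum (fun q _ => Finset.sum_le_sum (fun k _ => ?_))
          rcases lt_trichotomy q k with h | h | h
          · rw [if_pos h, if_neg (asymm h)]; linarith [hw q]
          · subst h; rw [if_neg (lt_irrefl q), if_neg (lt_irrefl q)]; linarith [hw q]
          · rw [if_neg (asymm h), if_pos h]; linarith [hw q]
      _ = 2 * (n : ℝ) * ∑ j, w j := by
          have he : ∀ q : J, ∑ _k : J, 2 * w q = (n : ℝ) * (2 * w q) := fun q => by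
            rw [Finset.sum_const, Finset.card_univ, nsmul_eq_mul]
          rw [Finset.sum_congr rfl (fun q _ => he q), ← Finset.mul_sum, ← Finset.mul_sum]
          ring
  -- combine
  have hG : ∑ k, ∑ j, (a k j - c k j) ≤ ∑ k : J, ∑ j, g k j :=
    Finset.sum_le_sum (fun k _ => Finset.sum_le_sum (fun j _ => hac k j))
  have hGsum : ∑ k, ∑ j, (a k j - c k j) = (∑ k, ∑ j, a k j) - (∑ k, ∑ j, c k j) := by
    simp [Finset.sum_sub_distrib]
  have hGF : ∑ k : J, ∑ j, g k j ≤ (n : ℝ) * F := by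
    calc ∑ k : J, ∑ j, g k j ≤ ∑ k : J, F := Finset.sum_le_sum (fun k _ => hgF k)
      _ = (n : ℝ) * F := by simp [Finset.sum_const, Finset.card_univ, nsmul_eq_mul, hn]
  have hsub : ∑ j, (α j - 2 * w j) = ∑ j, α j - 2 * ∑ j, w j := by
    rw [Finset.sum_sub_distrib, Finset.mul_sum]
  have key : (n : ℝ) * ∑ j, (α j - 2 * w j) ≤ (n : ℝ) * F := by
    have h1 : (n : ℝ) * ∑ j, (α j - 2 * w j)
        = (n : ℝ) * ∑ j, α j - 2 * (n : ℝ) * ∑ j, w j := by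
      rw [hsub]; ring
    linarith [hSa, hSc, hG, hGsum, hGF]
  have hnR : (0 : ℝ) < n := by exact_mod_cast hnpos
  exact le_of_mul_le_mul_left key hnR
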